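/- Let 𝒥 and 𝒦 be nonempty finite sets, let P be a probability distribution on 𝒥, and let σ(j,k), for j ∈ 𝒥 and k ∈ 𝒦, be density operators on ℂ^D. Then (1/|𝒦|) ∑_{k∈𝒦} [ S( ∑_{j} P(j) σ(j,k) ) − ∑_{j} P(j) S(σ(j,k)) ] − [ S( (1/|𝒦|) ∑_{j,k} P(j) σ(j,k) ) − ∑_{j} P(j) S( (1/|𝒦|) ∑_{k} σ(j,k) ) ] ≤ log₂ |𝒦|. In other words, the average over the key k of the Holevo quantities of the individual ensembles exceeds the Holevo quantity of the key-averaged ensemble by at most log₂|𝒦|. -/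

import Mathlib

open scoped BigOperators
open Classical
open scoped ComplexOrder

noncomputable section

/-- A density operator: positive semidefinite with unit trace. -/
def IsDensityOperator {D : ℕ} (ρ : Matrix (Fin D) (Fin D) ℂ) : Prop :=
  ρ.PosSemidef ∧ ρ.trace = 1

/-- Von Neumann entropy (base 2) of a matrix: `S(ρ) = −∑ λᵢ log₂ λᵢ` over the eigenvalues
of `ρ` when `ρ` is Hermitian (with `0 log₂ 0 = 0`), and `0` otherwise. -/
def vNEntropy {m : Type*} [Fintype m] [DecidableEq m] (ρ : Matrix m m ℂ) : ℝ :=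
  if h : ρ.IsHermitian then -∑ i, h.eigenvalues i * Real.logb 2 (h.eigenvalues i) else 0

namespace HolevoAux

open Matrix

/-- substochastic Jensen for negMulLog -/
lemma sum_negMulLog_le {M : Type*} [Fintype M] (t x : M → ℝ)
    (ht0 : ∀ m, 0 ≤ t m) (hts : ∑ m, t m ≤ 1) (hx : ∀ m, 0 ≤ x m) :
    ∑ m, t m * Real.negMulLog (x m) ≤ Real.negMulLog (∑ m, t m * x m) := by
  have h := Real.concaveOn_negMulLog.map_add_sum_le (t := Finset.univ) (w := t) (p := x)
      (v := 1 - ∑ m, t m) (q := 0) (fun i _ => ht0 i) (by ring) (fun i _ => Set.mem_Ici.2 (hx i))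
      (by linarith) (Set.mem_Ici.2 le_rfl)
  simpa [smul_eq_mul] using h

lemma core {A M : Type*} [Fintype A] [Fintype M] (w : A → M → ℝ) (μ : M → ℝ)
    (hw0 : ∀ a m, 0 ≤ w a m) (hμ0 : ∀ m, 0 ≤ μ m)
    (hrow : ∀ a, ∑ m, w a m ≤ 1)
    (hcol : ∀ m, μ m ≠ 0 → ∑ a, w a m = 1) :
    ∑ m, Real.negMulLog (μ m) ≤ ∑ a, Real.negMulLog (∑ m, w a m * μ m) := by
  calc ∑ m, Real.negMulLog (μ m) = ∑ m, (∑ a, w a m) * Real.negMulLog (μ m) := by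
        refine Finset.sum_congr rfl fun m _ => ?_
        by_cases h : μ m = 0
        · simp [h]
        · rw [hcol m h, one_mul]
    _ = ∑ a, ∑ m, w a m * Real.negMulLog (μ m) := by
        simp_rw [Finset.sum_mul]; exact Finset.sum_comm
    _ ≤ _ := Finset.sum_le_sum fun a _ => sum_negMulLog_le _ _ (hw0 a) (hrow a) hμ0

lemma vNEntropy_eq {m : Type*} [Fintype m] [DecidableEq m] {ρ : Matrix m m ℂ}
    (h : ρ.IsHermitian) :
    vNEntropy ρ = (Real.log 2)⁻¹ * ∑ i, Real.negMulLog (h.eigenvalues i) := by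
  rw [vNEntropy, dif_pos h, ← Finset.sum_neg_distrib, Finset.mul_sum]
  refine Finset.sum_congr rfl fun i _ => ?_
  rw [Real.logb, Real.negMulLog]
  ring

lemma posSemidef_smul {n : Type*} [Fintype n] {A : Matrix n n ℂ} (hA : A.PosSemidef)
    {c : ℝ} (hc : 0 ≤ c) : ((c : ℂ) • A).PosSemidef := by
  refine ⟨?_, fun x => ?_⟩
  · rw [IsHermitian, conjTranspose_smul, hA.1.eq]
    congr 1
    simp
  · exact (hA.smul (a := (c:ℂ)) (by exact_mod_cast hc)).2 x

lemma posSemidef_sum {κ n : Type*} [Fintype κ] [Fintype n] (f : κ → Matrix n n ℂ)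
    (h : ∀ k, (f k).PosSemidef) : (∑ k, f k).PosSemidef := by
  refine Finset.sum_induction f _ (fun a b ha hb => ha.add hb) Matrix.PosSemidef.zero
    fun k _ => h k

lemma unitary_row_normSq {n : Type*} [Fintype n] [DecidableEq n] {W : Matrix n n ℂ}
    (hW : W ∈ Matrix.unitaryGroup n ℂ) (i : n) : ∑ m, Complex.normSq (W i m) = 1 := by
  have h := Matrix.mem_unitaryGroup_iff.mp hW
  have h2 : (W * star W) i i = 1 := by rw [h]; simp
  rw [Matrix.mul_apply] at h2
  have h3 : (↑(∑ m, Complex.normSq (W i m)) : ℂ) = 1 := by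
    push_cast
    rw [← h2]
    refine Finset.sum_congr rfl fun m _ => ?_
    rw [Matrix.star_apply, ← Complex.mul_conj]
    rfl
  exact_mod_cast h3

lemma unitary_col_normSq {n : Type*} [Fintype n] [DecidableEq n] {W : Matrix n n ℂ}
    (hW : W ∈ Matrix.unitaryGroup n ℂ) (i : n) : ∑ m, Complex.normSq (W m i) = 1 := by
  have h := Matrix.mem_unitaryGroup_iff'.mp hW
  have h2 : (star W * W) i i = 1 := by rw [h]; simp
  rw [Matrix.mul_apply] at h2
  have h3 : (↑(∑ m, Complex.normSq (W m i)) : ℂ) = 1 := by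
    push_cast
    rw [← h2]
    refine Finset.sum_congr rfl fun m _ => ?_
    rw [Matrix.star_apply, mul_comm, ← Complex.mul_conj]
    rfl
  exact_mod_cast h3

lemma conj_diag_entry {n : Type*} [Fintype n] [DecidableEq n] (W : Matrix n n ℂ) (lam : n → ℝ)
    (m m' : n) :
    (W * Matrix.diagonal ((RCLike.ofReal : ℝ → ℂ) ∘ lam) * Wᴴ) m m' =
      ∑ i, (lam i : ℂ) * (W m i * (starRingEnd ℂ) (W m' i)) := by
  rw [Matrix.mul_apply]
  refine Finset.sum_congr rfl fun i _ => ?_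
  rw [Matrix.mul_diagonal, Matrix.conjTranspose_apply]
  simp only [Function.comp_apply, Matrix.star_apply]
  ring_nf
  rfl

lemma trace_eq_sum_eigenvalues {n : Type*} [Fintype n] [DecidableEq n] {A : Matrix n n ℂ}
    (hA : A.IsHermitian) : A.trace = ∑ i, (hA.eigenvalues i : ℂ) := by
  conv_lhs => rw [hA.spectral_theorem]
  rw [Unitary.conjStarAlgAut_apply]
  rw [Matrix.trace_mul_cycle]
  rw [(Matrix.mem_unitaryGroup_iff'.mp (hA.eigenvectorUnitary).2)]
  rw [one_mul, Matrix.trace_diagonal]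
  rfl

lemma entropy_concave {κ : Type*} [Fintype κ] {D : ℕ} (c : κ → ℝ)
    (hc0 : ∀ k, 0 ≤ c k) (hc1 : ∑ k, c k = 1)
    (ρ : κ → Matrix (Fin D) (Fin D) ℂ) (hρ : ∀ k, (ρ k).PosSemidef) :
    ∑ k, c k * vNEntropy (ρ k) ≤ vNEntropy (∑ k, (c k : ℂ) • ρ k) := by
  set ρb := ∑ k, (c k : ℂ) • ρ k with hρb
  have hb : ρb.PosSemidef := posSemidef_sum _ fun k => posSemidef_smul (hρ k) (hc0 k)
  have hbh : ρb.IsHermitian := hb.1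
  set U : Matrix (Fin D) (Fin D) ℂ := (hbh.eigenvectorUnitary : Matrix (Fin D) (Fin D) ℂ) with hUdef
  set μ := hbh.eigenvalues with hμdef
  have hkh : ∀ k, (ρ k).IsHermitian := fun k => (hρ k).1
  set W : κ → Matrix (Fin D) (Fin D) ℂ :=
    fun k => star U * ((hkh k).eigenvectorUnitary : Matrix (Fin D) (Fin D) ℂ) with hWdef
  set lam : κ → Fin D → ℝ := fun k => (hkh k).eigenvalues with hlamdef
  have hWu : ∀ k, W k ∈ Matrix.unitaryGroup (Fin D) ℂ := fun k =>
    mul_mem (Unitary.star_mem (hbh.eigenvectorUnitary).2) ((hkh k).eigenvectorUnitary).2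
  set d : κ → Fin D → ℝ := fun k i => ∑ m, Complex.normSq (W k i m) * lam k m with hddef
  have hd0 : ∀ k i, 0 ≤ d k i := fun k i =>
    Finset.sum_nonneg fun m _ =>
      mul_nonneg (Complex.normSq_nonneg _) ((hρ k).eigenvalues_nonneg m)
  have hconj : ∀ k, star U * ρ k * U =
      W k * Matrix.diagonal ((RCLike.ofReal : ℝ → ℂ) ∘ lam k) * (W k)ᴴ := by
    intro k
    have hsp := (hkh k).spectral_theorem
    calc star U * ρ k * U
        = star U * (((hkh k).eigenvectorUnitary : Matrix (Fin D) (Fin D) ℂ) *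
            Matrix.diagonal ((RCLike.ofReal : ℝ → ℂ) ∘ lam k) *
            star ((hkh k).eigenvectorUnitary : Matrix (Fin D) (Fin D) ℂ)) * U := by
          conv_lhs => rw [hsp]
          rfl
      _ = W k * Matrix.diagonal ((RCLike.ofReal : ℝ → ℂ) ∘ lam k) * (W k)ᴴ := by
          rw [hWdef]
          simp only [Matrix.star_eq_conjTranspose, Matrix.conjTranspose_mul,
            Matrix.conjTranspose_conjTranspose]
          noncomm_ring
  have hdentry : ∀ k i, (star U * ρ k * U) i i = ((d k i : ℝ) : ℂ) := by
    intro k i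
    rw [hconj k, conj_diag_entry, hddef]
    push_cast
    refine Finset.sum_congr rfl fun m _ => ?_
    rw [Complex.mul_conj]
    push_cast
    ring
  have hdiag : star U * ρb * U = Matrix.diagonal ((RCLike.ofReal : ℝ → ℂ) ∘ μ) :=
    by have := hbh.conjStarAlgAut_star_eigenvectorUnitary; rwa [Unitary.conjStarAlgAut_star_apply] at this
  have hmu : ∀ i, ∑ k, c k * d k i = μ i := by
    intro i
    have h2 : star U * ρb * U = ∑ k, (c k : ℂ) • (star U * ρ k * U) := by
      rw [hρb]
      rw [Finset.mul_sum, Finset.sum_mul]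
      refine Finset.sum_congr rfl fun k _ => by
        rw [Matrix.mul_smul, Matrix.smul_mul]
    have h3 : ((μ i : ℝ) : ℂ) = ∑ k, (c k : ℂ) * ((d k i : ℝ) : ℂ) := by
      calc ((μ i : ℝ) : ℂ) = (Matrix.diagonal ((RCLike.ofReal : ℝ → ℂ) ∘ μ)) i i := by
            rw [Matrix.diagonal_apply_eq]; rfl
        _ = (star U * ρb * U) i i := by rw [hdiag]
        _ = ∑ k, (c k : ℂ) * ((d k i : ℝ) : ℂ) := by
            rw [h2]
            simp only [Finset.sum_apply, Matrix.sum_apply, Matrix.smul_apply, smul_eq_mul]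
            exact Finset.sum_congr rfl fun k _ => by rw [hdentry]
    have h4 : ((∑ k, c k * d k i : ℝ) : ℂ) = ((μ i : ℝ) : ℂ) := by
      rw [h3]; push_cast; ring
    exact_mod_cast h4
  have hcore : ∀ k, ∑ m, Real.negMulLog (lam k m) ≤ ∑ i, Real.negMulLog (d k i) := by
    intro k
    exact core (fun i m => Complex.normSq (W k i m)) (lam k)
      (fun a m => Complex.normSq_nonneg _) (fun m => (hρ k).eigenvalues_nonneg m)
      (fun a => le_of_eq (unitary_row_normSq (hWu k) a))
      (fun m _ => unitary_col_normSq (hWu k) m)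
  rw [vNEntropy_eq hbh]
  have hrw : ∀ k, vNEntropy (ρ k) = (Real.log 2)⁻¹ * ∑ m, Real.negMulLog (lam k m) :=
    fun k => vNEntropy_eq (hkh k)
  calc ∑ k, c k * vNEntropy (ρ k)
      = (Real.log 2)⁻¹ * ∑ k, c k * ∑ m, Real.negMulLog (lam k m) := by
        rw [Finset.mul_sum]; exact Finset.sum_congr rfl fun k _ => by rw [hrw k]; ring
    _ ≤ (Real.log 2)⁻¹ * ∑ i, Real.negMulLog (μ i) := by
        refine mul_le_mul_of_nonneg_left ?_ (inv_nonneg.2 (Real.log_nonneg one_le_two))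
        calc ∑ k, c k * ∑ m, Real.negMulLog (lam k m)
            ≤ ∑ k, c k * ∑ i, Real.negMulLog (d k i) :=
              Finset.sum_le_sum fun k _ => mul_le_mul_of_nonneg_left (hcore k) (hc0 k)
          _ = ∑ i, ∑ k, c k * Real.negMulLog (d k i) := by
              simp_rw [Finset.mul_sum]; exact Finset.sum_comm
          _ ≤ ∑ i, Real.negMulLog (∑ k, c k * d k i) :=
              Finset.sum_le_sum fun i _ => sum_negMulLog_le c (fun k => d k i)
                hc0 (le_of_eq hc1) (fun k => hd0 k i)
          _ = ∑ i, Real.negMulLog (μ i) :=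
              Finset.sum_congr rfl fun i _ => by rw [hmu i]
lemma entropy_mix {κ : Type*} [Fintype κ] [Nonempty κ] {D : ℕ}
    (τ : κ → Matrix (Fin D) (Fin D) ℂ)
    (hτ : ∀ k, (τ k).PosSemidef) (htr : ∀ k, (τ k).trace = 1) :
    vNEntropy (((1 / (Fintype.card κ : ℝ) : ℝ) : ℂ) • ∑ k, τ k) ≤
      Real.logb 2 (Fintype.card κ : ℝ) + (1 / (Fintype.card κ : ℝ)) * ∑ k, vNEntropy (τ k) := by
  set K : ℝ := (Fintype.card κ : ℝ) with hKdef
  have hK0 : 0 < K := by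
    rw [hKdef]; exact_mod_cast Fintype.card_pos
  set τb := ((1 / K : ℝ) : ℂ) • ∑ k, τ k with hτb
  have hb : τb.PosSemidef := posSemidef_smul (posSemidef_sum _ hτ) (by positivity)
  have hbh : τb.IsHermitian := hb.1
  set U : Matrix (Fin D) (Fin D) ℂ := (hbh.eigenvectorUnitary : Matrix (Fin D) (Fin D) ℂ)
    with hUdef
  set μ := hbh.eigenvalues with hμdef
  have hμ0 : ∀ m, 0 ≤ μ m := fun m => hb.eigenvalues_nonneg m
  have hkh : ∀ k, (τ k).IsHermitian := fun k => (hτ k).1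
  set W : κ → Matrix (Fin D) (Fin D) ℂ :=
    fun k => star U * ((hkh k).eigenvectorUnitary : Matrix (Fin D) (Fin D) ℂ) with hWdef
  set lam : κ → Fin D → ℝ := fun k => (hkh k).eigenvalues with hlamdef
  have hWu : ∀ k, W k ∈ Matrix.unitaryGroup (Fin D) ℂ := fun k =>
    mul_mem (Unitary.star_mem (hbh.eigenvectorUnitary).2) ((hkh k).eigenvectorUnitary).2
  have hlam0 : ∀ k i, 0 ≤ lam k i := fun k i => (hτ k).eigenvalues_nonneg i
  have hlamsum : ∀ k, ∑ i, lam k i = 1 := by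
    intro k
    have h := trace_eq_sum_eigenvalues (hkh k)
    rw [htr k] at h
    exact_mod_cast h.symm
  set r : κ × Fin D → ℝ := fun a => lam a.1 a.2 / K with hrdef
  have hr0 : ∀ a, 0 ≤ r a := fun a => div_nonneg (hlam0 _ _) hK0.le
  have hconj : ∀ k, star U * τ k * U =
      W k * Matrix.diagonal ((RCLike.ofReal : ℝ → ℂ) ∘ lam k) * (W k)ᴴ := by
    intro k
    have hsp := (hkh k).spectral_theorem
    calc star U * τ k * U
        = star U * (((hkh k).eigenvectorUnitary : Matrix (Fin D) (Fin D) ℂ) *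
            Matrix.diagonal ((RCLike.ofReal : ℝ → ℂ) ∘ lam k) *
            star ((hkh k).eigenvectorUnitary : Matrix (Fin D) (Fin D) ℂ)) * U := by
          conv_lhs => rw [hsp]
          rfl
      _ = W k * Matrix.diagonal ((RCLike.ofReal : ℝ → ℂ) ∘ lam k) * (W k)ᴴ := by
          rw [hWdef]
          simp only [Matrix.star_eq_conjTranspose, Matrix.conjTranspose_mul,
            Matrix.conjTranspose_conjTranspose]
          noncomm_ring
  have hdiag : star U * τb * U = Matrix.diagonal ((RCLike.ofReal : ℝ → ℂ) ∘ μ) :=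
    by have := hbh.conjStarAlgAut_star_eigenvectorUnitary; rwa [Unitary.conjStarAlgAut_star_apply] at this
  have hmaster : ∀ m m', Matrix.diagonal ((RCLike.ofReal : ℝ → ℂ) ∘ μ) m m' =
      ∑ a : κ × Fin D, (r a : ℂ) * (W a.1 m a.2 * (starRingEnd ℂ) (W a.1 m' a.2)) := by
    intro m m'
    have h2 : star U * τb * U = ((1 / K : ℝ) : ℂ) •
        ∑ k, (W k * Matrix.diagonal ((RCLike.ofReal : ℝ → ℂ) ∘ lam k) * (W k)ᴴ) := by
      rw [hτb, Matrix.mul_smul, Matrix.smul_mul]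
      congr 1
      rw [Finset.mul_sum, Finset.sum_mul]
      exact Finset.sum_congr rfl fun k _ => hconj k
    rw [← hdiag, h2]
    rw [Matrix.smul_apply, Matrix.sum_apply]
    rw [Fintype.sum_prod_type]
    rw [Finset.smul_sum]
    refine Finset.sum_congr rfl fun k _ => ?_
    rw [conj_diag_entry]
    rw [Finset.smul_sum]
    refine Finset.sum_congr rfl fun i _ => ?_
    rw [hrdef]
    dsimp only
    rw [smul_eq_mul]
    push_cast
    ring
  have hG : ∀ m, μ m = ∑ a : κ × Fin D, r a * Complex.normSq (W a.1 m a.2) := by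
    intro m
    have h := hmaster m m
    rw [Matrix.diagonal_apply_eq] at h
    have h2 : ((μ m : ℝ) : ℂ) = ((∑ a : κ × Fin D, r a * Complex.normSq (W a.1 m a.2) : ℝ) : ℂ) := by
      rw [show ((μ m : ℝ) : ℂ) = ((RCLike.ofReal : ℝ → ℂ) ∘ μ) m from rfl, h]
      push_cast
      refine Finset.sum_congr rfl fun a _ => ?_
      rw [Complex.mul_conj]
    exact_mod_cast h2
  have hWzero : ∀ m, μ m = 0 → ∀ a : κ × Fin D, r a * Complex.normSq (W a.1 m a.2) = 0 := by
    intro m hm a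
    have h := (hG m).symm
    rw [hm] at h
    exact (Finset.sum_eq_zero_iff_of_nonneg
      (fun a _ => mul_nonneg (hr0 a) (Complex.normSq_nonneg _))).mp h a (Finset.mem_univ a)
  set w : κ × Fin D → Fin D → ℝ :=
    fun a m => if μ m = 0 then 0 else r a * Complex.normSq (W a.1 m a.2) / μ m with hwdef
  have hw0 : ∀ a m, 0 ≤ w a m := by
    intro a m
    rw [hwdef]
    dsimp only
    split
    · exact le_rfl
    · exact div_nonneg (mul_nonneg (hr0 a) (Complex.normSq_nonneg _)) (hμ0 m)
  have hcol : ∀ m, μ m ≠ 0 → ∑ a, w a m = 1 := by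
    intro m hm
    simp only [hwdef, if_neg hm]
    rw [← Finset.sum_div, ← hG m, div_self hm]
  have hwmul : ∀ a, ∑ m, w a m * μ m = r a := by
    intro a
    have hterm : ∀ m, w a m * μ m
        = if μ m = 0 then 0 else r a * Complex.normSq (W a.1 m a.2) := by
      intro m
      rw [hwdef]
      dsimp only
      split
      · rw [zero_mul]
      · rw [div_mul_cancel₀]
        assumption
    rw [Finset.sum_congr rfl fun m _ => hterm m]
    by_cases hra : r a = 0
    · rw [hra]
      refine Finset.sum_eq_zero fun m _ => ?_
      split
      · rfl
      · exact zero_mul _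
    · have hall : ∀ m, (if μ m = 0 then (0:ℝ) else r a * Complex.normSq (W a.1 m a.2))
          = r a * Complex.normSq (W a.1 m a.2) := by
        intro m
        split
        · rename_i hm
          rcases mul_eq_zero.mp (hWzero m hm a) with h | h
          · exact absurd h hra
          · rw [h, mul_zero]
        · rfl
      rw [Finset.sum_congr rfl fun m _ => hall m, ← Finset.mul_sum,
        unitary_col_normSq (hWu a.1) a.2, mul_one]
  -- the isometry `Vm` and the projection argument for row sums
  set Vm : Matrix (κ × Fin D) (Fin D) ℂ := Matrix.of fun a m =>
    if μ m = 0 then 0 else ((Real.sqrt (r a) * (Real.sqrt (μ m))⁻¹ : ℝ) : ℂ) * W a.1 m a.2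
    with hVmdef
  have hVmapp : ∀ a m, Vm a m =
      if μ m = 0 then 0 else ((Real.sqrt (r a) * (Real.sqrt (μ m))⁻¹ : ℝ) : ℂ) * W a.1 m a.2 :=
    fun a m => rfl
  have hwV : ∀ a m, w a m = Complex.normSq (Vm a m) := by
    intro a m
    rw [hwdef, hVmapp]
    dsimp only
    split
    · rename_i hm
      simp
    · rename_i hm
      have hμpos : 0 < μ m := (hμ0 m).lt_of_ne (Ne.symm hm)
      rw [Complex.normSq_mul, Complex.normSq_ofReal]
      have h1 : Real.sqrt (r a) * (Real.sqrt (μ m))⁻¹ * (Real.sqrt (r a) * (Real.sqrt (μ m))⁻¹)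
          = r a / μ m := by
        rw [show Real.sqrt (r a) * (Real.sqrt (μ m))⁻¹ * (Real.sqrt (r a) * (Real.sqrt (μ m))⁻¹)
            = (Real.sqrt (r a) * Real.sqrt (r a)) / (Real.sqrt (μ m) * Real.sqrt (μ m)) by ring,
          Real.mul_self_sqrt (hr0 a), Real.mul_self_sqrt (hμ0 m)]
      rw [h1]
      ring
  have hS : ∀ m m', ∑ a : κ × Fin D,
      (r a : ℂ) * ((starRingEnd ℂ) (W a.1 m a.2) * W a.1 m' a.2)
      = if m = m' then ((μ m : ℝ) : ℂ) else 0 := by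
    intro m m'
    have h := congrArg (starRingEnd ℂ) (hmaster m m')
    rw [map_sum] at h
    have hl : (starRingEnd ℂ) (Matrix.diagonal ((RCLike.ofReal : ℝ → ℂ) ∘ μ) m m')
        = if m = m' then ((μ m : ℝ) : ℂ) else 0 := by
      rw [Matrix.diagonal_apply]
      split
      · rename_i hmm
        subst hmm
        exact Complex.conj_ofReal _
      · exact map_zero _
    rw [hl] at h
    rw [h]
    refine Finset.sum_congr rfl fun a _ => ?_
    simp only [_root_.map_mul, Complex.conj_ofReal, Complex.conj_conj]
  have hVV : Vmᴴ * Vm = Matrix.diagonal (fun m => if μ m = 0 then (0:ℂ) else 1) := by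
    ext m m'
    rw [Matrix.mul_apply, Matrix.diagonal_apply]
    simp only [Matrix.conjTranspose_apply, Matrix.star_apply]
    by_cases hm : μ m = 0
    · have hz : ∀ a : κ × Fin D, star (Vm a m) * Vm a m' = 0 := by
        intro a
        rw [hVmapp, if_pos hm, star_zero, zero_mul]
      rw [Finset.sum_congr rfl fun a _ => hz a, Finset.sum_const, smul_zero]
      by_cases hmm : m = m'
      · subst hmm
        rw [if_pos rfl, if_pos hm]
      · rw [if_neg hmm]
    by_cases hm' : μ m' = 0
    · have hz : ∀ a : κ × Fin D, star (Vm a m) * Vm a m' = 0 := by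
        intro a
        rw [hVmapp a m', if_pos hm', mul_zero]
      rw [Finset.sum_congr rfl fun a _ => hz a, Finset.sum_const, smul_zero]
      by_cases hmm : m = m'
      · subst hmm
        exact absurd hm' hm
      · rw [if_neg hmm]
    · have hterm : ∀ a : κ × Fin D, star (Vm a m) * Vm a m'
          = (((Real.sqrt (μ m))⁻¹ * (Real.sqrt (μ m'))⁻¹ : ℝ) : ℂ) *
            ((r a : ℂ) * ((starRingEnd ℂ) (W a.1 m a.2) * W a.1 m' a.2)) := by
        intro a
        rw [hVmapp a m, hVmapp a m', if_neg hm, if_neg hm']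
        rw [show (star (((Real.sqrt (r a) * (Real.sqrt (μ m))⁻¹ : ℝ) : ℂ) * W a.1 m a.2) :ℂ)
            = (((Real.sqrt (r a) * (Real.sqrt (μ m))⁻¹ : ℝ) : ℂ)) * (starRingEnd ℂ) (W a.1 m a.2) by
          rw [star_mul']
          congr 1
          exact Complex.conj_ofReal _]
        have hrr : ((Real.sqrt (r a) : ℝ) : ℂ) * ((Real.sqrt (r a) : ℝ) : ℂ) = ((r a : ℝ) : ℂ) := by
          rw [← Complex.ofReal_mul, Real.mul_self_sqrt (hr0 a)]
        calc (((Real.sqrt (r a) * (Real.sqrt (μ m))⁻¹ : ℝ) : ℂ)) * (starRingEnd ℂ) (W a.1 m a.2) *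
              ((((Real.sqrt (r a) * (Real.sqrt (μ m'))⁻¹ : ℝ) : ℂ)) * W a.1 m' a.2)
            = (((Real.sqrt (μ m))⁻¹ * (Real.sqrt (μ m'))⁻¹ : ℝ) : ℂ) *
              ((((Real.sqrt (r a) : ℝ) : ℂ) * ((Real.sqrt (r a) : ℝ) : ℂ)) *
                ((starRingEnd ℂ) (W a.1 m a.2) * W a.1 m' a.2)) := by
              push_cast
              ring
          _ = _ := by rw [hrr]
      rw [Finset.sum_congr rfl fun a _ => hterm a, ← Finset.mul_sum, hS m m']
      by_cases hmm : m = m'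
      · subst hmm
        rw [if_pos rfl, if_pos rfl, if_neg hm]
        rw [show (((Real.sqrt (μ m))⁻¹ * (Real.sqrt (μ m))⁻¹ : ℝ) : ℂ) * ((μ m : ℝ) : ℂ)
            = ((((Real.sqrt (μ m))⁻¹ * (Real.sqrt (μ m))⁻¹) * μ m : ℝ) : ℂ) by push_cast; ring]
        rw [show ((Real.sqrt (μ m))⁻¹ * (Real.sqrt (μ m))⁻¹) * μ m = (1:ℝ) by
          rw [← mul_inv, Real.mul_self_sqrt (hμ0 m)]
          field_simp]
        exact Complex.ofReal_one
      · rw [if_neg hmm, if_neg hmm, mul_zero]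
  set Pm := Vm * Vmᴴ with hPdef
  have hVq : Vm * Matrix.diagonal (fun m => if μ m = 0 then (0:ℂ) else 1) = Vm := by
    ext a m
    rw [Matrix.mul_diagonal]
    by_cases hm : μ m = 0
    · rw [if_pos hm, mul_zero, hVmapp, if_pos hm]
    · rw [if_neg hm, mul_one]
  have hPP : Pm * Pm = Pm := by
    have h1 : Pm * Pm = Vm * (Vmᴴ * Vm) * Vmᴴ := by
      rw [hPdef, Matrix.mul_assoc Vm Vmᴴ (Vm * Vmᴴ), ← Matrix.mul_assoc Vmᴴ Vm Vmᴴ,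
        ← Matrix.mul_assoc Vm (Vmᴴ * Vm) Vmᴴ]
    rw [h1, hVV, hVq]
  have hPsym : ∀ a b, Pm b a = (starRingEnd ℂ) (Pm a b) := by
    intro a b
    have hh : Pmᴴ = Pm := by
      rw [hPdef, Matrix.conjTranspose_mul, Matrix.conjTranspose_conjTranspose]
    conv_lhs => rw [← hh]
    rfl
  have hrowbound : ∀ a, ∑ m, Complex.normSq (Vm a m) ≤ 1 := by
    intro a
    set p := ∑ m, Complex.normSq (Vm a m) with hpdef
    have hp0 : 0 ≤ p := Finset.sum_nonneg fun m _ => Complex.normSq_nonneg _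
    have hPaa : Pm a a = ((p : ℝ) : ℂ) := by
      rw [hPdef, Matrix.mul_apply, hpdef]
      push_cast
      refine Finset.sum_congr rfl fun m _ => ?_
      rw [Matrix.conjTranspose_apply,
        show (star (Vm a m) : ℂ) = (starRingEnd ℂ) (Vm a m) from rfl, Complex.mul_conj]
    have hPPaa : ((p : ℝ) : ℂ) = ((∑ b, Complex.normSq (Pm a b) : ℝ) : ℂ) := by
      calc ((p : ℝ) : ℂ) = Pm a a := hPaa.symm
        _ = (Pm * Pm) a a := by rw [hPP]
        _ = ∑ b, Pm a b * Pm b a := Matrix.mul_apply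
        _ = ((∑ b, Complex.normSq (Pm a b) : ℝ) : ℂ) := by
            push_cast
            exact Finset.sum_congr rfl fun b _ => by rw [hPsym a b, Complex.mul_conj]
    have hpreal : p = ∑ b, Complex.normSq (Pm a b) := by exact_mod_cast hPPaa
    have hsq : p * p ≤ p := by
      calc p * p = Complex.normSq (Pm a a) := by rw [hPaa, Complex.normSq_ofReal]
        _ ≤ ∑ b, Complex.normSq (Pm a b) :=
            Finset.single_le_sum (fun b _ => Complex.normSq_nonneg (Pm a b)) (Finset.mem_univ a)
        _ = p := hpreal.symm
    nlinarith
  have hrow : ∀ a, ∑ m, w a m ≤ 1 := by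
    intro a
    rw [Finset.sum_congr rfl fun m _ => hwV a m]
    exact hrowbound a
  -- apply the core majorization lemma
  have hmain : ∑ m, Real.negMulLog (μ m) ≤ ∑ a : κ × Fin D, Real.negMulLog (r a) := by
    have h := core w μ hw0 hμ0 hrow hcol
    exact h.trans_eq (Finset.sum_congr rfl fun a _ => by rw [hwmul a])
  -- final bookkeeping
  have hsum_r : ∑ a : κ × Fin D, Real.negMulLog (r a)
      = Real.log K + (1 / K) * ∑ k, ∑ i, Real.negMulLog (lam k i) := by
    have hterm : ∀ k i, Real.negMulLog (lam k i / K)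
        = (1 / K) * Real.negMulLog (lam k i) + lam k i * ((1 / K) * Real.log K) := by
      intro k i
      rw [show lam k i / K = lam k i * (1 / K) by ring, Real.negMulLog_mul]
      have : Real.negMulLog (1 / K) = (1 / K) * Real.log K := by
        rw [Real.negMulLog, one_div, Real.log_inv]
        ring
      rw [this]
    calc ∑ a : κ × Fin D, Real.negMulLog (r a)
        = ∑ k, ∑ i, ((1 / K) * Real.negMulLog (lam k i) + lam k i * ((1 / K) * Real.log K)) := by
          rw [Fintype.sum_prod_type]
          exact Finset.sum_congr rfl fun k _ => Finset.sum_congr rfl fun i _ => hterm k i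
      _ = (1 / K) * ∑ k, ∑ i, Real.negMulLog (lam k i)
          + ((1 / K) * Real.log K) * ∑ k, ∑ i, lam k i := by
          simp only [Finset.sum_add_distrib, Finset.mul_sum]
          congr 1
          exact Finset.sum_congr rfl fun k _ => Finset.sum_congr rfl fun i _ => mul_comm _ _
      _ = Real.log K + (1 / K) * ∑ k, ∑ i, Real.negMulLog (lam k i) := by
          rw [Finset.sum_congr rfl fun k (_ : k ∈ Finset.univ) => hlamsum k]
          rw [Finset.sum_const, Finset.card_univ, nsmul_eq_mul, mul_one]
          rw [show ((Fintype.card κ : ℝ)) = K from rfl]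
          field_simp
          ring
  have hlog2 : (0:ℝ) ≤ (Real.log 2)⁻¹ := inv_nonneg.2 (Real.log_nonneg one_le_two)
  rw [vNEntropy_eq hbh]
  have hvk : ∀ k, vNEntropy (τ k) = (Real.log 2)⁻¹ * ∑ i, Real.negMulLog (lam k i) :=
    fun k => vNEntropy_eq (hkh k)
  calc (Real.log 2)⁻¹ * ∑ i, Real.negMulLog (μ i)
      ≤ (Real.log 2)⁻¹ * (Real.log K + (1 / K) * ∑ k, ∑ i, Real.negMulLog (lam k i)) := by
        refine mul_le_mul_of_nonneg_left ?_ hlog2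
        rw [← hsum_r]
        exact hmain
    _ = Real.logb 2 K + (1 / K) * ∑ k, vNEntropy (τ k) := by
        simp only [hvk, Real.logb]
        rw [← Finset.mul_sum]
        ring
end HolevoAux

/-- **The averaged Holevo quantity exceeds the Holevo quantity of the averaged ensemble by
at most `log₂ |𝒦|`**: for density operators `σ(j,k)` and a probability distribution `P`
on `𝒥`,
`(1/|𝒦|) ∑_k χ(P; σ(·,k)) − χ(P; (1/|𝒦|) ∑_k σ(·,k)) ≤ log₂ |𝒦|`. -/
theorem holevo_key_average_bound
    {𝒥 𝒦 : Type*} [Fintype 𝒥] [Nonempty 𝒥] [Fintype 𝒦] [Nonempty 𝒦] {D : ℕ}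
    (P : 𝒥 → ℝ) (hP0 : ∀ j, 0 ≤ P j) (hP1 : ∑ j, P j = 1)
    (σ : 𝒥 → 𝒦 → Matrix (Fin D) (Fin D) ℂ) (hσ : ∀ j k, IsDensityOperator (σ j k)) :
    (1 / (Fintype.card 𝒦 : ℝ)) *
        ∑ k : 𝒦, (vNEntropy (∑ j, (P j : ℂ) • σ j k) - ∑ j, P j * vNEntropy (σ j k)) -
      (vNEntropy (((1 / (Fintype.card 𝒦 : ℝ)) : ℂ) • ∑ j, ∑ k, (P j : ℂ) • σ j k) -
        ∑ j, P j * vNEntropy (((1 / (Fintype.card 𝒦 : ℝ)) : ℂ) • ∑ k, σ j k)) ≤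
      Real.logb 2 (Fintype.card 𝒦 : ℝ) := by
  have hK0 : 0 < (Fintype.card 𝒦 : ℝ) := by exact_mod_cast Fintype.card_pos
  have hρk : ∀ k, (∑ j, (P j : ℂ) • σ j k).PosSemidef := fun k =>
    HolevoAux.posSemidef_sum _ fun j => HolevoAux.posSemidef_smul (hσ j k).1 (hP0 j)
  -- concavity part
  have hA : (1 / (Fintype.card 𝒦 : ℝ)) * ∑ k, vNEntropy (∑ j, (P j : ℂ) • σ j k) ≤
      vNEntropy (((1 / (Fintype.card 𝒦 : ℝ) : ℝ) : ℂ) • ∑ j, ∑ k, (P j : ℂ) • σ j k) := by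
    have h := HolevoAux.entropy_concave (fun _ : 𝒦 => 1 / (Fintype.card 𝒦 : ℝ))
      (fun _ => by positivity)
      (by
        rw [Finset.sum_const, Finset.card_univ, nsmul_eq_mul]
        field_simp)
      (fun k => ∑ j, (P j : ℂ) • σ j k) hρk
    have heq : (∑ k, ((1 / (Fintype.card 𝒦 : ℝ) : ℝ) : ℂ) • ∑ j, (P j : ℂ) • σ j k)
        = ((1 / (Fintype.card 𝒦 : ℝ) : ℝ) : ℂ) • ∑ j, ∑ k, (P j : ℂ) • σ j k := by
      rw [← Finset.smul_sum, Finset.sum_comm]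
    rw [heq] at h
    rw [Finset.mul_sum]
    exact h
  -- mixing part
  have hB : ∀ j, vNEntropy (((1 / (Fintype.card 𝒦 : ℝ) : ℝ) : ℂ) • ∑ k, σ j k) ≤
      Real.logb 2 (Fintype.card 𝒦 : ℝ) +
        (1 / (Fintype.card 𝒦 : ℝ)) * ∑ k, vNEntropy (σ j k) := fun j =>
    HolevoAux.entropy_mix (σ j) (fun k => (hσ j k).1) (fun k => (hσ j k).2)
  have h2 : ∑ j, P j * vNEntropy (((1 / (Fintype.card 𝒦 : ℝ) : ℝ) : ℂ) • ∑ k, σ j k) ≤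
      Real.logb 2 (Fintype.card 𝒦 : ℝ) +
        ∑ j, P j * ((1 / (Fintype.card 𝒦 : ℝ)) * ∑ k, vNEntropy (σ j k)) := by
    calc ∑ j, P j * vNEntropy (((1 / (Fintype.card 𝒦 : ℝ) : ℝ) : ℂ) • ∑ k, σ j k)
        ≤ ∑ j, P j * (Real.logb 2 (Fintype.card 𝒦 : ℝ) +
            (1 / (Fintype.card 𝒦 : ℝ)) * ∑ k, vNEntropy (σ j k)) :=
          Finset.sum_le_sum fun j _ => mul_le_mul_of_nonneg_left (hB j) (hP0 j)
      _ = Real.logb 2 (Fintype.card 𝒦 : ℝ) +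
            ∑ j, P j * ((1 / (Fintype.card 𝒦 : ℝ)) * ∑ k, vNEntropy (σ j k)) := by
          simp only [mul_add]
          rw [Finset.sum_add_distrib, ← Finset.sum_mul, hP1, one_mul]
  have e1 : (1 / (Fintype.card 𝒦 : ℝ)) *
      ∑ k : 𝒦, (vNEntropy (∑ j, (P j : ℂ) • σ j k) - ∑ j, P j * vNEntropy (σ j k))
      = (1 / (Fintype.card 𝒦 : ℝ)) * ∑ k, vNEntropy (∑ j, (P j : ℂ) • σ j k)
        - ∑ j, P j * ((1 / (Fintype.card 𝒦 : ℝ)) * ∑ k, vNEntropy (σ j k)) := by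
    rw [Finset.sum_sub_distrib, mul_sub]
    congr 1
    rw [Finset.sum_comm, Finset.mul_sum]
    refine Finset.sum_congr rfl fun j _ => ?_
    rw [← Finset.mul_sum]
    ring
  have hcoe : ((1 / (Fintype.card 𝒦 : ℝ) : ℝ) : ℂ) = 1 / ((Fintype.card 𝒦 : ℝ) : ℂ) := by
    push_cast
    ring
  rw [hcoe] at hA h2
  rw [e1]
  linarith [hA, h2]

end
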